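/- Let 0 < p ≤ 2 and let f ∈ H^p(δ²) have atomic decomposition (f_n, R_n)_{n∈ℤ}. Define g = (g_{IJ}) by g_{IJ} = 2^{−n(2−p)/2} f_{IJ} for I×J ∈ R_n, and g_{IJ} = 0 if I×J lies in no R_n. Then there is a constant c_p > 0, depending only on p, such that ‖g‖₂² ≤ c_p · ‖f‖_{H^p(δ²)}^p. -/

import Mathlib

open MeasureTheory Set
open scoped ENNReal

/-- A dyadic interval `[k/2^n, (k+1)/2^n) ⊆ [0,1)`. -/
structure DyadicInterval where
  n : ℕ
  k : ℕ
  hk : k < 2 ^ n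

namespace DyadicInterval

/-- Left endpoint. -/
noncomputable def left (I : DyadicInterval) : ℝ := I.k / 2 ^ I.n

/-- Right endpoint. -/
noncomputable def right (I : DyadicInterval) : ℝ := (I.k + 1) / 2 ^ I.n

/-- Midpoint. -/
noncomputable def mid (I : DyadicInterval) : ℝ := (I.k + 1 / 2) / 2 ^ I.n

/-- The underlying point set of the dyadic interval. -/
noncomputable def set (I : DyadicInterval) : Set ℝ := Set.Ico I.left I.right

/-- The length `|I| = 2^{-n}`. -/
noncomputable def len (I : DyadicInterval) : ℝ := 1 / 2 ^ I.n

/-- The `L^∞`-normalised Haar function `h_I`: `+1` on the left half of `I`,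
`-1` on the right half of `I`, `0` elsewhere. -/
noncomputable def haar (I : DyadicInterval) (s : ℝ) : ℝ :=
  if s ∈ Set.Ico I.left I.mid then 1
  else if s ∈ Set.Ico I.mid I.right then -1
  else 0

end DyadicInterval

/-- A dyadic rectangle `I × J`. -/
abbrev DyadicRect := DyadicInterval × DyadicInterval

namespace DyadicRect

/-- The underlying point set of the dyadic rectangle. -/
noncomputable def set (R : DyadicRect) : Set (ℝ × ℝ) := R.1.set ×ˢ R.2.set

/-- The area `|I||J|`. -/
noncomputable def area (R : DyadicRect) : ℝ := R.1.len * R.2.len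

/-- The 2D Haar function `h_{I×J}(s,t) = h_I(s) h_J(t)`. -/
noncomputable def haar (R : DyadicRect) (x : ℝ × ℝ) : ℝ := R.1.haar x.1 * R.2.haar x.2

end DyadicRect

/-- The unit square `[0,1]²`. -/
noncomputable def unitSq : Set (ℝ × ℝ) := Set.Icc (0:ℝ) 1 ×ˢ Set.Icc (0:ℝ) 1

/-- The square function `S(f)(s,t) = (∑_{I×J} f_{I×J}² 1_{I×J}(s,t))^{1/2}`,
valued in `ℝ≥0∞`. -/
noncomputable def sqS (f : DyadicRect → ℝ) (x : ℝ × ℝ) : ℝ≥0∞ :=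
  (∑' R : DyadicRect, Set.indicator R.set (fun _ => ENNReal.ofReal (f R ^ 2)) x) ^ (1/2 : ℝ)

/-- The `H^p(δ²)` quasi-norm `‖f‖_{H^p} = (∫_{[0,1]²} S(f)^p dm)^{1/p}`, valued in `ℝ≥0∞`.
Membership `f ∈ H^p(δ²)` is expressed as `Hnorm p f ≠ ∞`. -/
noncomputable def Hnorm (p : ℝ) (f : DyadicRect → ℝ) : ℝ≥0∞ :=
  (∫⁻ x in unitSq, sqS f x ^ p) ^ (1/p)

/-- `‖f‖₂ = ‖f‖_{H²(δ²)} = (∑_{I×J} f_{I×J}² |I||J|)^{1/2}`. -/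
noncomputable def l2norm (f : DyadicRect → ℝ) : ℝ≥0∞ :=
  (∑' R : DyadicRect, ENNReal.ofReal (f R ^ 2) * ENNReal.ofReal R.area) ^ (1/2 : ℝ)

/-- The level set `F_n = {(s,t) ∈ [0,1]² : S(f)(s,t) > 2^n}`. -/
noncomputable def Fset (f : DyadicRect → ℝ) (n : ℤ) : Set (ℝ × ℝ) :=
  {x ∈ unitSq | (2 : ℝ≥0∞) ^ (n : ℝ) < sqS f x}

/-- The collection `R_n` of dyadic rectangles `I×J` with
`|(I×J) ∩ F_n| > |I×J|/2` and `|(I×J) ∩ F_{n+1}| ≤ |I×J|/2`. -/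
noncomputable def Rcoll (f : DyadicRect → ℝ) (n : ℤ) : Set DyadicRect :=
  {R | ENNReal.ofReal R.area / 2 < volume (R.set ∩ Fset f n) ∧
       volume (R.set ∩ Fset f (n + 1)) ≤ ENNReal.ofReal R.area / 2}

/-- The atom `f_n = ∑_{I×J ∈ R_n} f_{I×J} h_{I×J}`, i.e. the coefficient
sequence of `f` restricted to `R_n`. -/
noncomputable def fAtom (f : DyadicRect → ℝ) (n : ℤ) : DyadicRect → ℝ :=
  (Rcoll f n).indicator f

/-- The point set `R_n* = ⋃_{I×J ∈ R_n} I×J`. -/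
noncomputable def RcollStar (f : DyadicRect → ℝ) (n : ℤ) : Set (ℝ × ℝ) :=
  ⋃ R ∈ Rcoll f n, R.set

/-! ### Auxiliary lemmas -/

open scoped Classical

instance : Countable DyadicInterval := by
  have : Function.Injective (fun I : DyadicInterval => (I.n, I.k)) := by
    rintro ⟨n, k, h⟩ ⟨n', k', h'⟩ hI
    simp only [Prod.mk.injEq] at hI
    cases hI.1; cases hI.2; rfl
  exact this.countable

namespace DyadicInterval

lemma left_nonneg (I : DyadicInterval) : 0 ≤ I.left := by
  unfold left; positivity

lemma right_le_one (I : DyadicInterval) : I.right ≤ 1 := by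
  unfold right
  rw [div_le_one (by positivity)]
  have : (I.k : ℝ) + 1 ≤ ((2:ℝ) ^ I.n) := by exact_mod_cast I.hk
  simpa using this

lemma set_subset (I : DyadicInterval) : I.set ⊆ Set.Icc 0 1 := by
  intro x hx
  exact ⟨le_trans I.left_nonneg hx.1, le_trans hx.2.le I.right_le_one⟩

lemma len_nonneg (I : DyadicInterval) : 0 ≤ I.len := by unfold len; positivity

lemma volume_set (I : DyadicInterval) : volume I.set = ENNReal.ofReal I.len := by
  rw [set, Real.volume_Ico]
  congr 1
  unfold left right len
  field_simp
  ring

lemma measurableSet_set (I : DyadicInterval) : MeasurableSet I.set := measurableSet_Ico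

end DyadicInterval

namespace DyadicRect

lemma set_subset_unitSq (R : DyadicRect) : R.set ⊆ unitSq :=
  Set.prod_mono R.1.set_subset R.2.set_subset

lemma area_nonneg (R : DyadicRect) : 0 ≤ R.area :=
  mul_nonneg R.1.len_nonneg R.2.len_nonneg

lemma volume_set (R : DyadicRect) : volume R.set = ENNReal.ofReal R.area := by
  rw [set, MeasureTheory.Measure.volume_eq_prod, MeasureTheory.Measure.prod_prod, R.1.volume_set,
    R.2.volume_set, ← ENNReal.ofReal_mul R.1.len_nonneg, area]

lemma measurableSet_set (R : DyadicRect) : MeasurableSet R.set :=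
  R.1.measurableSet_set.prod R.2.measurableSet_set

end DyadicRect

lemma measurableSet_unitSq : MeasurableSet unitSq := measurableSet_Icc.prod measurableSet_Icc

/-- The square of the square function, `T f x = ∑ f_R² 1_R(x)`. -/
noncomputable def Tf (f : DyadicRect → ℝ) (x : ℝ × ℝ) : ℝ≥0∞ :=
  ∑' R : DyadicRect, Set.indicator R.set (fun _ => ENNReal.ofReal (f R ^ 2)) x

lemma measurable_Tf (f : DyadicRect → ℝ) : Measurable (Tf f) :=
  Measurable.ennreal_tsum fun R => measurable_const.indicator R.measurableSet_set

lemma sqS_sq (f : DyadicRect → ℝ) (x : ℝ × ℝ) : sqS f x ^ (2:ℝ) = Tf f x := by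
  rw [sqS, ← ENNReal.rpow_mul]
  norm_num [Tf]

lemma measurable_sqS (f : DyadicRect → ℝ) : Measurable (sqS f) := by
  have : Measurable fun x => Tf f x ^ (1/2 : ℝ) := (measurable_Tf f).pow_const _
  exact this

lemma measurableSet_Fset (f : DyadicRect → ℝ) (n : ℤ) : MeasurableSet (Fset f n) := by
  have : Fset f n = unitSq ∩ {x | (2 : ℝ≥0∞) ^ (n : ℝ) < sqS f x} := rfl
  rw [this]
  exact measurableSet_unitSq.inter (measurableSet_lt measurable_const (measurable_sqS f))

lemma Fset_anti (f : DyadicRect → ℝ) {n m : ℤ} (h : n ≤ m) : Fset f m ⊆ Fset f n := by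
  intro x hx
  exact ⟨hx.1, lt_of_le_of_lt
    (ENNReal.rpow_le_rpow_of_exponent_le one_le_two (by exact_mod_cast h)) hx.2⟩

lemma Rcoll_unique {f : DyadicRect → ℝ} {n m : ℤ} {R : DyadicRect}
    (hn : R ∈ Rcoll f n) (hm : R ∈ Rcoll f m) : n = m := by
  have key : ∀ a b : ℤ, R ∈ Rcoll f a → R ∈ Rcoll f b → ¬ a < b := by
    intro a b ha hb hab
    have h1 : Fset f b ⊆ Fset f (a+1) := Fset_anti f (by omega)
    have h2 : volume (R.set ∩ Fset f b) ≤ ENNReal.ofReal R.area / 2 :=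
      le_trans (measure_mono (Set.inter_subset_inter_right _ h1)) ha.2
    exact absurd (lt_of_lt_of_le hb.1 h2) (lt_irrefl _)
  exact le_antisymm (not_lt.1 (key m n hm hn)) (not_lt.1 (key n m hn hm))

lemma half_le {f : DyadicRect → ℝ} {n : ℤ} {R : DyadicRect} (hR : R ∈ Rcoll f n) :
    ENNReal.ofReal R.area ≤ 2 * volume (R.set \ Fset f (n+1)) := by
  set a := ENNReal.ofReal R.area with ha
  have hfin : a / 2 ≠ ∞ := by
    rw [ha, ENNReal.div_eq_inv_mul]; exact ENNReal.mul_ne_top (by norm_num) ENNReal.ofReal_ne_top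
  have h1 : a ≤ volume (R.set ∩ Fset f (n+1)) + volume (R.set \ Fset f (n+1)) := by
    rw [ha, ← R.volume_set]; exact measure_le_inter_add_diff _ _ _
  have h2 : a ≤ a / 2 + volume (R.set \ Fset f (n+1)) :=
    le_trans h1 (add_le_add hR.2 le_rfl)
  have h3 : a / 2 ≤ volume (R.set \ Fset f (n+1)) := by
    have := h2
    nth_rewrite 1 [← ENNReal.add_halves a] at this
    exact (ENNReal.add_le_add_iff_left hfin).1 this
  calc a = 2 * (a / 2) := by rw [ENNReal.mul_div_cancel' (by norm_num) (by norm_num)]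
    _ ≤ 2 * volume (R.set \ Fset f (n+1)) := mul_le_mul_right h3 _

/-- The weight `2^{-n(2-p)}`. -/
noncomputable def wgt (p : ℝ) (n : ℤ) : ℝ≥0∞ := ENNReal.ofReal ((2:ℝ) ^ (-(n:ℝ) * (2 - p)))

/-- `φ_n(x) = ∑_{R ∈ R_n} f_R² 1_R(x)`. -/
noncomputable def phi (f : DyadicRect → ℝ) (n : ℤ) (x : ℝ × ℝ) : ℝ≥0∞ :=
  ∑' R : DyadicRect,
    if R ∈ Rcoll f n then Set.indicator R.set (fun _ => ENNReal.ofReal (f R ^ 2)) x else 0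

lemma measurable_phi (f : DyadicRect → ℝ) (n : ℤ) : Measurable (phi f n) := by
  refine Measurable.ennreal_tsum fun R => ?_
  by_cases h : R ∈ Rcoll f n
  · simp only [if_pos h]
    exact measurable_const.indicator R.measurableSet_set
  · simp only [if_neg h]
    exact measurable_const

lemma phi_le_Tf (f : DyadicRect → ℝ) (n : ℤ) (x : ℝ × ℝ) : phi f n x ≤ Tf f x :=
  ENNReal.tsum_le_tsum fun R => by split_ifs with h; exacts [le_rfl, zero_le]

lemma phi_eq_zero_of_not_mem {f : DyadicRect → ℝ} {n : ℤ} {x : ℝ × ℝ} (hx : x ∉ unitSq) :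
    phi f n x = 0 := by
  rw [phi, ENNReal.tsum_eq_zero]
  intro R
  split_ifs with h
  · exact Set.indicator_of_notMem (fun hmem => hx (R.set_subset_unitSq hmem)) _
  · rfl

/-- Lemma A: the `ℓ²`-mass of the atom `f_n` is controlled by the integral of `φ_n`
off `F_{n+1}`. -/
lemma atom_l2_le (f : DyadicRect → ℝ) (n : ℤ) :
    (∑' R : DyadicRect,
        if R ∈ Rcoll f n then ENNReal.ofReal (f R ^ 2) * ENNReal.ofReal R.area else 0)
      ≤ 2 * ∫⁻ x in unitSq, Set.indicator (Fset f (n+1))ᶜ (phi f n) x := by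
  have hmeasE : MeasurableSet ((Fset f (n+1))ᶜ) := (measurableSet_Fset f _).compl
  have hint : (∫⁻ x in unitSq, Set.indicator (Fset f (n+1))ᶜ (phi f n) x)
      = ∫⁻ x in unitSq \ Fset f (n+1), phi f n x := by
    rw [lintegral_indicator hmeasE, Measure.restrict_restrict hmeasE]
    congr 1
    rw [Set.inter_comm, Set.diff_eq]
  have hswap : (∫⁻ x in unitSq \ Fset f (n+1), phi f n x)
      = ∑' R : DyadicRect, if R ∈ Rcoll f n then
          ENNReal.ofReal (f R ^ 2) * volume (R.set \ Fset f (n+1)) else 0 := by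
    simp only [phi]
    rw [lintegral_tsum]
    · refine tsum_congr fun R => ?_
      by_cases h : R ∈ Rcoll f n
      · simp only [if_pos h]
        rw [lintegral_indicator R.measurableSet_set, setLIntegral_const,
          Measure.restrict_apply R.measurableSet_set, ← Set.inter_diff_assoc,
          Set.inter_eq_left.2 R.set_subset_unitSq]
      · simp only [if_neg h, lintegral_const, zero_mul]
    · intro R
      by_cases h : R ∈ Rcoll f n
      · simp only [if_pos h]
        exact (measurable_const.indicator R.measurableSet_set).aemeasurable
      · simp only [if_neg h]
        exact aemeasurable_const
  rw [hint, hswap, ← ENNReal.tsum_mul_left]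
  refine ENNReal.tsum_le_tsum fun R => ?_
  by_cases h : R ∈ Rcoll f n
  · simp only [if_pos h]
    calc ENNReal.ofReal (f R ^ 2) * ENNReal.ofReal R.area
        ≤ ENNReal.ofReal (f R ^ 2) * (2 * volume (R.set \ Fset f (n+1))) :=
          mul_le_mul_right (half_le h) _
      _ = 2 * (ENNReal.ofReal (f R ^ 2) * volume (R.set \ Fset f (n+1))) := by ring
  · simp [if_neg h]

lemma pow2_ofReal (z : ℝ) : (2:ℝ≥0∞) ^ z = ENNReal.ofReal ((2:ℝ) ^ z) := by
  rw [← ENNReal.ofReal_rpow_of_pos (by norm_num : (0:ℝ) < 2)]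
  norm_num

/-- Lemma B: the pointwise bound `∑_n 2^{-n(2-p)} 1_{F_{n+1}^c}(x) φ_n(x) ≲ S(f)(x)^p`. -/
lemma pointwise_sum_le (p : ℝ) (hp0 : 0 < p) (hp2 : p < 2) (f : DyadicRect → ℝ) (x : ℝ × ℝ) :
    ∑' n : ℤ, wgt p n * Set.indicator (Fset f (n+1))ᶜ (phi f n) x
      ≤ 4 * (1 - ENNReal.ofReal ((2:ℝ) ^ (p - 2)))⁻¹ * sqS f x ^ p := by
  set S := sqS f x with hS
  set ρ := ENNReal.ofReal ((2:ℝ) ^ (p - 2)) with hρ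
  have hterm : ∀ n : ℤ, Set.indicator (Fset f (n+1))ᶜ (phi f n) x
      ≤ (if S ≤ (2:ℝ≥0∞) ^ ((n:ℝ) + 1) then S ^ (2:ℝ) else 0) := by
    intro n
    by_cases hc : S ≤ (2:ℝ≥0∞) ^ ((n:ℝ) + 1)
    · rw [if_pos hc, hS, sqS_sq]
      exact le_trans (Set.indicator_le_self _ _ x) (phi_le_Tf f n x)
    · rw [if_neg hc]
      by_cases hx : x ∈ unitSq
      · have hxF : x ∈ Fset f (n+1) := by
          refine ⟨hx, ?_⟩
          have h1 := not_le.1 hc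
          convert h1 using 2
          push_cast
          ring
        rw [Set.indicator_of_notMem (by simpa using hxF)]
      · rw [Set.indicator_apply]
        split_ifs
        · exact le_of_eq (phi_eq_zero_of_not_mem hx)
        · exact le_rfl
  refine le_trans (ENNReal.tsum_le_tsum fun n => mul_le_mul_right (hterm n) _) ?_
  by_cases hS0 : S = 0
  · have hzero : ∀ n : ℤ,
        wgt p n * (if S ≤ (2:ℝ≥0∞) ^ ((n:ℝ) + 1) then S ^ (2:ℝ) else 0) = 0 := by
      intro n
      rw [hS0]
      split_ifs <;> simp [ENNReal.zero_rpow_of_pos (by norm_num : (0:ℝ) < 2)]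
    rw [tsum_congr hzero, tsum_zero]
    exact zero_le
  by_cases hStop : S = ∞
  · have : (4 : ℝ≥0∞) * (1 - ρ)⁻¹ * S ^ p = ∞ := by
      rw [hStop, ENNReal.top_rpow_of_pos hp0, ENNReal.mul_top]
      refine mul_ne_zero (by norm_num) (ENNReal.inv_ne_zero.2 ?_)
      exact ne_top_of_le_ne_top (by norm_num) tsub_le_self
    rw [this]
    exact le_top
  -- main case : 0 < S < ∞
  have hr : 0 < S.toReal := ENNReal.toReal_pos hS0 hStop
  set r := S.toReal with hrdef
  have hSr : S = ENNReal.ofReal r := (ENNReal.ofReal_toReal hStop).symm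
  set y := Real.logb 2 r with hy
  set n₀ : ℤ := ⌈y⌉ - 1 with hn₀
  have h2y : (2:ℝ) ^ y = r := Real.rpow_logb (by norm_num) (by norm_num) hr
  have hn₀y : (n₀:ℝ) < y := by
    have := Int.ceil_lt_add_one (R := ℝ) y
    push_cast [hn₀]
    linarith
  have hyn₀ : y ≤ (n₀:ℝ) + 1 := by
    have := Int.le_ceil y
    push_cast [hn₀]
    linarith
  have key1 : (2:ℝ) ^ ((n₀:ℝ)) < r := by
    rw [← h2y]
    exact Real.rpow_lt_rpow_of_exponent_lt one_lt_two hn₀y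
  have key2 : r ≤ (2:ℝ) ^ ((n₀:ℝ)) * 2 := by
    rw [← Real.rpow_add_one (by norm_num : (2:ℝ) ≠ 0), ← h2y]
    exact Real.rpow_le_rpow_of_exponent_le one_le_two hyn₀
  set h : ℤ → ℝ≥0∞ :=
    fun n => wgt p n * (if S ≤ (2:ℝ≥0∞) ^ ((n:ℝ) + 1) then S ^ (2:ℝ) else 0) with hh
  have hvanish : ∀ n : ℤ, n < n₀ → h n = 0 := by
    intro n hn
    have hlt : (2:ℝ≥0∞) ^ ((n:ℝ) + 1) < S := by
      rw [pow2_ofReal, hSr]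
      refine (ENNReal.ofReal_lt_ofReal_iff hr).2 ?_
      refine lt_of_le_of_lt ?_ key1
      refine Real.rpow_le_rpow_of_exponent_le one_le_two ?_
      have : (n:ℝ) + 1 ≤ (n₀:ℝ) := by exact_mod_cast (by omega : n + 1 ≤ n₀)
      linarith
    rw [hh]
    simp only [if_neg (not_le.2 hlt), mul_zero]
  have hreindex : (∑' n : ℤ, h n) = ∑' k : ℕ, h (n₀ + k) := by
    refine (Function.Injective.tsum_eq (g := fun k : ℕ => n₀ + (k:ℤ)) ?_ ?_).symm
    · intro a b hab
      simpa using hab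
    · intro m hm
      rcases lt_or_ge m n₀ with hlt | hle
      · exact absurd (hvanish m hlt) hm
      · refine ⟨(m - n₀).toNat, ?_⟩
        show n₀ + ((m - n₀).toNat : ℤ) = m
        omega
  set A : ℝ≥0∞ := ENNReal.ofReal ((2:ℝ) ^ (-(n₀:ℝ) * (2 - p))) with hA
  have hbound : ∀ k : ℕ, h (n₀ + k) ≤ (A * S ^ (2:ℝ)) * ρ ^ k := by
    intro k
    have hw : wgt p (n₀ + k) = A * ρ ^ k := by
      rw [wgt, hρ, hA, ← ENNReal.ofReal_pow (by positivity), ← ENNReal.ofReal_mul (by positivity)]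
      congr 1
      rw [← Real.rpow_natCast ((2:ℝ) ^ (p - 2)) k, ← Real.rpow_mul (by norm_num),
        ← Real.rpow_add (by norm_num)]
      congr 1
      push_cast
      ring
    have hb1 : h (n₀ + (k:ℤ)) ≤ wgt p (n₀ + (k:ℤ)) * S ^ (2:ℝ) := by
      simp only [hh]
      refine mul_le_mul_right ?_ _
      split_ifs
      · exact le_rfl
      · exact zero_le
    calc h (n₀ + k) ≤ wgt p (n₀ + k) * S ^ (2:ℝ) := hb1
      _ = (A * S ^ (2:ℝ)) * ρ ^ k := by rw [hw]; ring
  have hsum : (∑' n : ℤ, h n) ≤ (A * S ^ (2:ℝ)) * (1 - ρ)⁻¹ := by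
    rw [hreindex]
    refine le_trans (ENNReal.tsum_le_tsum hbound) ?_
    rw [ENNReal.tsum_mul_left, ENNReal.tsum_geometric]
  refine le_trans hsum ?_
  -- Finally: A * S² ≤ 4 * S^p
  have hfinal : A * S ^ (2:ℝ) ≤ 4 * S ^ p := by
    have hS2 : S ^ (2:ℝ) = ENNReal.ofReal (r ^ (2:ℝ)) := by
      rw [hSr, ENNReal.ofReal_rpow_of_pos hr]
    have hSp : S ^ p = ENNReal.ofReal (r ^ p) := by
      rw [hSr, ENNReal.ofReal_rpow_of_pos hr]
    have hreal : (2:ℝ) ^ (-(n₀:ℝ) * (2 - p)) * r ^ (2:ℝ) ≤ 4 * r ^ p := by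
      have e1 : (2:ℝ) ^ (-(n₀:ℝ) * (2 - p)) = ((2:ℝ) ^ ((n₀:ℝ))) ^ (p - 2) := by
        rw [← Real.rpow_mul (by norm_num)]
        congr 1
        ring
      have e2 : ((2:ℝ) ^ ((n₀:ℝ))) ^ (p - 2) ≤ (r / 2) ^ (p - 2) := by
        refine Real.rpow_le_rpow_of_nonpos (by positivity) ?_ (by linarith)
        linarith
      have e3 : (r / 2) ^ (p - 2) = r ^ (p - 2) * (2:ℝ) ^ (2 - p) := by
        rw [Real.div_rpow hr.le (by norm_num), div_eq_mul_inv, ← Real.rpow_neg (by norm_num)]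
        congr 1
        ring
      have e4 : (2:ℝ) ^ (2 - p) ≤ 4 := by
        calc (2:ℝ) ^ (2 - p) ≤ (2:ℝ) ^ (2:ℝ) :=
              Real.rpow_le_rpow_of_exponent_le one_le_two (by linarith)
          _ = 4 := by
              rw [show (2:ℝ) = ((2:ℕ):ℝ) by norm_num, Real.rpow_natCast]
              norm_num
      have e5 : r ^ (p - 2) * r ^ (2:ℝ) = r ^ p := by
        rw [← Real.rpow_add hr]
        congr 1
        ring
      calc (2:ℝ) ^ (-(n₀:ℝ) * (2 - p)) * r ^ (2:ℝ)
          ≤ (r ^ (p - 2) * (2:ℝ) ^ (2 - p)) * r ^ (2:ℝ) := by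
            rw [e1]
            refine mul_le_mul_of_nonneg_right (le_trans e2 (le_of_eq e3)) ?_
            positivity
        _ = (2:ℝ) ^ (2 - p) * (r ^ (p - 2) * r ^ (2:ℝ)) := by ring
        _ = (2:ℝ) ^ (2 - p) * r ^ p := by rw [e5]
        _ ≤ 4 * r ^ p := by
            refine mul_le_mul_of_nonneg_right e4 ?_
            positivity
    calc A * S ^ (2:ℝ) = ENNReal.ofReal ((2:ℝ) ^ (-(n₀:ℝ) * (2 - p)) * r ^ (2:ℝ)) := by
          rw [hA, hS2, ← ENNReal.ofReal_mul (by positivity)]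
      _ ≤ ENNReal.ofReal (4 * r ^ p) := ENNReal.ofReal_le_ofReal hreal
      _ = 4 * S ^ p := by
          rw [ENNReal.ofReal_mul (by norm_num), hSp]
          norm_num
  calc (A * S ^ (2:ℝ)) * (1 - ρ)⁻¹ ≤ (4 * S ^ p) * (1 - ρ)⁻¹ := mul_le_mul_left hfinal _
    _ = 4 * (1 - ρ)⁻¹ * S ^ p := by ring

lemma wgt_ne_top (p : ℝ) (n : ℤ) : wgt p n ≠ ∞ := by
  rw [wgt]; exact ENNReal.ofReal_ne_top

lemma Hnorm_rpow (p : ℝ) (hp0 : 0 < p) (f : DyadicRect → ℝ) :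
    Hnorm p f ^ p = ∫⁻ x in unitSq, sqS f x ^ p := by
  rw [Hnorm, ← ENNReal.rpow_mul, one_div, inv_mul_cancel₀ (ne_of_gt hp0), ENNReal.rpow_one]

lemma l2norm_sq (g : DyadicRect → ℝ) :
    l2norm g ^ (2:ℝ) = ∑' R : DyadicRect, ENNReal.ofReal (g R ^ 2) * ENNReal.ofReal R.area := by
  rw [l2norm, ← ENNReal.rpow_mul]
  norm_num

/-- the function `g` with `g_{IJ} = 2^{-n(2-p)/2} f_{IJ}` on `R_n`
satisfies `‖g‖₂² ≤ c_p ‖f‖_{H^p(δ²)}^p`. -/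
theorem rescaled_atoms_l2_bound (p : ℝ) (hp0 : 0 < p) (hp2 : p ≤ 2) :
    ∃ c : ℝ, 0 < c ∧
      ∀ f : DyadicRect → ℝ, Hnorm p f ≠ ∞ →
        ∀ g : DyadicRect → ℝ,
          (∀ (n : ℤ) (R : DyadicRect), R ∈ Rcoll f n →
            g R = (2:ℝ) ^ (-(n:ℝ) * (2 - p) / 2) * f R) →
          (∀ R : DyadicRect, (∀ n : ℤ, R ∉ Rcoll f n) → g R = 0) →
          l2norm g ^ (2:ℝ) ≤ ENNReal.ofReal c * Hnorm p f ^ p := by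
  rcases lt_or_eq_of_le hp2 with hp2' | hp2'
  · -- the case `p < 2`
    have hρlt : (2:ℝ) ^ (p - 2) < 1 :=
      Real.rpow_lt_one_of_one_lt_of_neg one_lt_two (by linarith)
    have hρpos : (0:ℝ) < (2:ℝ) ^ (p - 2) := by positivity
    refine ⟨8 * (1 - (2:ℝ) ^ (p - 2))⁻¹, mul_pos (by norm_num) (inv_pos.2 (by linarith)), ?_⟩
    intro f hf g hg hg0
    set ρ := ENNReal.ofReal ((2:ℝ) ^ (p - 2)) with hρ
    have h1ρ : ρ < 1 := by rw [hρ]; exact ENNReal.ofReal_lt_one.2 hρlt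
    have h1ρ0 : (1:ℝ≥0∞) - ρ ≠ 0 := by
      intro h
      rw [tsub_eq_zero_iff_le] at h
      exact absurd h (not_le.2 h1ρ)
    have hfin : (4:ℝ≥0∞) * (1 - ρ)⁻¹ ≠ ∞ :=
      ENNReal.mul_ne_top (by norm_num) (ENNReal.inv_ne_top.2 h1ρ0)
    have hcost : ENNReal.ofReal (8 * (1 - (2:ℝ) ^ (p - 2))⁻¹) = 8 * (1 - ρ)⁻¹ := by
      rw [ENNReal.ofReal_mul (by norm_num), ENNReal.ofReal_inv_of_pos (by linarith),
        ENNReal.ofReal_sub _ hρpos.le, ENNReal.ofReal_one]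
      norm_num
      rw [hρ]
    have hgR : ∀ R : DyadicRect, ENNReal.ofReal (g R ^ 2) * ENNReal.ofReal R.area
        = ∑' n : ℤ, if R ∈ Rcoll f n then
            wgt p n * (ENNReal.ofReal (f R ^ 2) * ENNReal.ofReal R.area) else 0 := by
      intro R
      by_cases hex : ∃ n, R ∈ Rcoll f n
      · obtain ⟨n₁, hn₁⟩ := hex
        rw [tsum_eq_single n₁ (fun m hm => if_neg fun hmem => hm (Rcoll_unique hmem hn₁))]
        rw [if_pos hn₁, hg n₁ R hn₁]
        have hsq : ((2:ℝ) ^ (-(n₁:ℝ) * (2 - p) / 2) * f R) ^ 2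
            = (2:ℝ) ^ (-(n₁:ℝ) * (2 - p)) * f R ^ 2 := by
          rw [mul_pow, ← Real.rpow_natCast ((2:ℝ) ^ (-(n₁:ℝ) * (2 - p) / 2)) 2,
            ← Real.rpow_mul (by norm_num)]
          norm_num
        rw [hsq, ENNReal.ofReal_mul (by positivity), wgt, mul_assoc]
      · push_neg at hex
        rw [hg0 R hex]
        simp [hex]
    calc l2norm g ^ (2:ℝ)
        = ∑' R : DyadicRect, ∑' n : ℤ, (if R ∈ Rcoll f n then
            wgt p n * (ENNReal.ofReal (f R ^ 2) * ENNReal.ofReal R.area) else 0) := by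
          rw [l2norm_sq]; exact tsum_congr hgR
      _ = ∑' n : ℤ, ∑' R : DyadicRect, (if R ∈ Rcoll f n then
            wgt p n * (ENNReal.ofReal (f R ^ 2) * ENNReal.ofReal R.area) else 0) :=
          ENNReal.tsum_comm
      _ = ∑' n : ℤ, wgt p n * ∑' R : DyadicRect, (if R ∈ Rcoll f n then
            ENNReal.ofReal (f R ^ 2) * ENNReal.ofReal R.area else 0) := by
          refine tsum_congr fun n => ?_
          rw [← ENNReal.tsum_mul_left]
          exact tsum_congr fun R => by split_ifs <;> simp
      _ ≤ ∑' n : ℤ, wgt p n *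
            (2 * ∫⁻ x in unitSq, Set.indicator (Fset f (n+1))ᶜ (phi f n) x) :=
          ENNReal.tsum_le_tsum fun n => mul_le_mul_right (atom_l2_le f n) _
      _ = 2 * ∑' n : ℤ, ∫⁻ x in unitSq,
            wgt p n * Set.indicator (Fset f (n+1))ᶜ (phi f n) x := by
          rw [← ENNReal.tsum_mul_left]
          refine tsum_congr fun n => ?_
          rw [lintegral_const_mul' _ _ (wgt_ne_top p n)]
          ring
      _ = 2 * ∫⁻ x in unitSq, ∑' n : ℤ,
            wgt p n * Set.indicator (Fset f (n+1))ᶜ (phi f n) x := by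
          congr 1
          exact (lintegral_tsum fun n =>
            (((measurable_phi f n).indicator
              (measurableSet_Fset f (n+1)).compl).const_mul _).aemeasurable).symm
      _ ≤ 2 * ∫⁻ x in unitSq, 4 * (1 - ρ)⁻¹ * sqS f x ^ p :=
          mul_le_mul_right (lintegral_mono fun x => pointwise_sum_le p hp0 hp2' f x) 2
      _ = 8 * (1 - ρ)⁻¹ * ∫⁻ x in unitSq, sqS f x ^ p := by
          rw [lintegral_const_mul' _ _ hfin]
          ring
      _ = ENNReal.ofReal (8 * (1 - (2:ℝ) ^ (p - 2))⁻¹) * Hnorm p f ^ p := by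
          rw [hcost, Hnorm_rpow p hp0]
  · -- the case `p = 2`
    subst hp2'
    refine ⟨1, one_pos, ?_⟩
    intro f hf g hg hg0
    have hterm : ∀ R : DyadicRect, ENNReal.ofReal (g R ^ 2) ≤ ENNReal.ofReal (f R ^ 2) := by
      intro R
      by_cases hex : ∃ n, R ∈ Rcoll f n
      · obtain ⟨n, hn⟩ := hex
        rw [hg n R hn]
        have he : (-(n:ℝ) * (2 - 2) / 2) = 0 := by ring
        rw [he, Real.rpow_zero, one_mul]
      · push_neg at hex
        rw [hg0 R hex]
        simp [sq_nonneg]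
    calc l2norm g ^ (2:ℝ)
        = ∑' R : DyadicRect, ENNReal.ofReal (g R ^ 2) * ENNReal.ofReal R.area := l2norm_sq g
      _ ≤ ∑' R : DyadicRect, ENNReal.ofReal (f R ^ 2) * volume R.set := by
          refine ENNReal.tsum_le_tsum fun R => ?_
          rw [R.volume_set]
          exact mul_le_mul_left (hterm R) _
      _ = ∫⁻ x in unitSq, Tf f x := by
          unfold Tf
          rw [lintegral_tsum fun R =>
            (measurable_const.indicator R.measurableSet_set).aemeasurable]
          refine tsum_congr fun R => ?_
          rw [lintegral_indicator R.measurableSet_set, setLIntegral_const,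
            Measure.restrict_apply R.measurableSet_set, Set.inter_eq_left.2 R.set_subset_unitSq]
      _ = ∫⁻ x in unitSq, sqS f x ^ (2:ℝ) := lintegral_congr fun x => (sqS_sq f x).symm
      _ = ENNReal.ofReal 1 * Hnorm 2 f ^ (2:ℝ) := by
          rw [ENNReal.ofReal_one, one_mul, Hnorm_rpow 2 (by norm_num)]
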